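/- Let k be a field and let G be a torsion-free nilpotent group of nilpotency class at most 2. Suppose M is a faithful irreducible kG-module which is induced from an irreducible kN-submodule V of M for some subgroup N of G. Then every torsion element of the quotient group N/ker_N(V) lies in the centre of N/ker_N(V), where ker_N(V) = {g ∈ N : v·g = v for all v ∈ V}. -/

import Mathlib

universe u v w

/-- A field is finitely generated (over its prime subfield). -/
def IsFGField (k : Type*) [Field k] : Prop :=
  ∃ s : Finset k, Subfield.closure (s : Set k) = ⊤

/-- The subgroup of elements of `p`-power order in an abelian group. -/
def primaryPart (A : Type*) [CommGroup A] (p : ℕ) : Subgroup A where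
  carrier := {x | ∃ n : ℕ, x ^ p ^ n = 1}
  one_mem' := ⟨0, one_pow _⟩
  mul_mem' := by
    rintro a b ⟨n, hn⟩ ⟨m, hm⟩
    refine ⟨n + m, ?_⟩
    rw [mul_pow, pow_add, pow_mul, hn, one_pow, one_mul, Nat.mul_comm, pow_mul, hm, one_pow]
  inv_mem' := by
    rintro a ⟨n, hn⟩
    exact ⟨n, by rw [inv_pow, hn, inv_one]⟩

/-- A group has finite Prüfer rank: there is `m` such that every finitely generated
subgroup can be generated by at most `m` elements. -/
def HasFinitePruferRank (G : Type*) [Group G] : Prop :=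
  ∃ m : ℕ, ∀ H : Subgroup G, H.FG →
    ∃ s : Finset G, ↑s ⊆ (H : Set G) ∧ s.card ≤ m ∧ Subgroup.closure (s : Set G) = H

/-- An abelian group has finite total rank. -/
def FiniteTotalRank (A : Type*) [CommGroup A] : Prop :=
  HasFinitePruferRank (A ⧸ CommGroup.torsion A) ∧
  {p : ℕ | p.Prime ∧ primaryPart A p ≠ ⊥}.Finite ∧
  ∀ p : ℕ, p.Prime → HasFinitePruferRank (primaryPart A p)

/-- `G` has an infinite `p`-section: subgroups `K ⊴ H ≤ G` with `H/K` an infinite `p`-group. -/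
def HasInfinitePSection (G : Type*) [Group G] (p : ℕ) : Prop :=
  ∃ (H : Subgroup G) (K : Subgroup ↥H) (_ : K.Normal),
    Infinite (↥H ⧸ K) ∧ ∀ x : ↥H ⧸ K, ∃ n : ℕ, x ^ p ^ n = 1

/-- `char k ∉ Sp(G)`: the characteristic of `k` is zero or a prime `p` such that `G`
has no infinite `p`-section. -/
def CharNotInSp (k : Type*) [Field k] (G : Type*) [Group G] : Prop :=
  ∀ p : ℕ, p.Prime → ringChar k = p → ¬ HasInfinitePSection G p

/-- A quasicyclic (Prüfer) group: an infinite locally cyclic `p`-group for some prime `p`. -/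
def IsQuasicyclic (Q : Type*) [Group Q] : Prop :=
  Infinite Q ∧ ∃ p : ℕ, p.Prime ∧ (∀ x : Q, ∃ n : ℕ, x ^ p ^ n = 1) ∧
    ∀ s : Finset Q, ∃ g : Q, Subgroup.closure (s : Set Q) = Subgroup.zpowers g

/-- A minimax group: it has a finite chain `⊥ = c 0 ≤ ⋯ ≤ c n = ⊤` of subgroups, each
normal in the next, all whose factors are cyclic or quasicyclic. -/
def IsMinimax (G : Type u) [Group G] : Prop :=
  ∃ (n : ℕ) (c : Fin (n + 1) → Subgroup G), c 0 = ⊥ ∧ c (Fin.last n) = ⊤ ∧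
    (∀ i : Fin n, c i.castSucc ≤ c i.succ) ∧
    ∀ i : Fin n, ∃ (A : Type u) (_ : Group A) (f : ↥(c i.succ) →* A),
      Function.Surjective f ∧ f.ker = (c i.castSucc).subgroupOf (c i.succ) ∧
      (IsCyclic A ∨ IsQuasicyclic A)

/-- A soluble FATR-group: it has a finite chain `⊥ = c 0 ≤ ⋯ ≤ c n = ⊤` of subgroups, each
normal in the next, all whose factors are abelian of finite total rank. -/
def IsFATRGroup (G : Type u) [Group G] : Prop :=
  ∃ (n : ℕ) (c : Fin (n + 1) → Subgroup G), c 0 = ⊥ ∧ c (Fin.last n) = ⊤ ∧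
    (∀ i : Fin n, c i.castSucc ≤ c i.succ) ∧
    ∀ i : Fin n, ∃ (A : Type u) (_ : CommGroup A) (f : ↥(c i.succ) →* A),
      Function.Surjective f ∧ f.ker = (c i.castSucc).subgroupOf (c i.succ) ∧
      FiniteTotalRank A

/-- Multiplication by a group element as a `k`-linear map on a `kG`-module. -/
noncomputable def gSmul (k : Type*) [Field k] {G : Type*} [Group G] (M : Type*) [AddCommGroup M]
    [Module (MonoidAlgebra k G) M] [Module k M] [IsScalarTower k (MonoidAlgebra k G) M]
    (g : G) : M →ₗ[k] M where
  toFun m := MonoidAlgebra.of k G g • m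
  map_add' x y := smul_add _ x y
  map_smul' c m := by
    simp only [RingHom.id_apply]
    rw [← algebraMap_smul (MonoidAlgebra k G) c m, ← mul_smul,
      ← Algebra.commutes c (MonoidAlgebra.of k G g), mul_smul, algebraMap_smul]

/-- `V` (a `kN`-invariant subspace of `M`) is induced from the `kH`-subspace `W`, where
`H ≤ N`: `V` is the internal direct sum `⊕_{t ∈ T} t • W` over a transversal `T ⊆ N`
of `H` in `N`. -/
def IsInducedFromSub (k : Type*) [Field k] {G : Type*} [Group G] (M : Type*) [AddCommGroup M]
    [Module (MonoidAlgebra k G) M] [Module k M] [IsScalarTower k (MonoidAlgebra k G) M]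
    (N : Subgroup G) (V : Submodule k M) (H : Subgroup G) (W : Submodule k M) : Prop :=
  H ≤ N ∧ W ≤ V ∧
  (∀ h ∈ H, ∀ w ∈ W, MonoidAlgebra.of k G h • w ∈ W) ∧
  ∃ T : Set G, T ⊆ (N : Set G) ∧
    (∀ g ∈ N, ∃! t, t ∈ T ∧ t⁻¹ * g ∈ H) ∧
    iSupIndep (fun t : T => W.map (gSmul k M (t : G))) ∧
    (⨆ t : T, W.map (gSmul k M (t : G))) = V

/-- The `kG`-module `M` is induced from the `kH`-subspace `U`. -/
def IsInducedFrom (k : Type*) [Field k] {G : Type*} [Group G] (M : Type*) [AddCommGroup M]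
    [Module (MonoidAlgebra k G) M] [Module k M] [IsScalarTower k (MonoidAlgebra k G) M]
    (H : Subgroup G) (U : Submodule k M) : Prop :=
  IsInducedFromSub k M ⊤ ⊤ H U

/-- The kernel of the action of a subgroup `N` on a subspace `V` of a `kG`-module. -/
noncomputable def moduleKer (k : Type*) [Field k] {G : Type*} [Group G] (M : Type*)
    [AddCommGroup M] [Module (MonoidAlgebra k G) M] [Module k M]
    [IsScalarTower k (MonoidAlgebra k G) M]
    (N : Subgroup G) (V : Submodule k M) : Subgroup N where
  carrier := {g | ∀ v ∈ V, MonoidAlgebra.of k G (g : G) • v = v}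
  one_mem' := by
    intro v _
    show MonoidAlgebra.of k G ((1 : N) : G) • v = v
    rw [OneMemClass.coe_one, map_one, one_smul]
  mul_mem' := by
    intro a b ha hb v hv
    show MonoidAlgebra.of k G ((a * b : N) : G) • v = v
    have : ((a * b : N) : G) = (a : G) * (b : G) := rfl
    rw [this, map_mul, mul_smul, hb v hv, ha v hv]
  inv_mem' := by
    intro a ha v hv
    show MonoidAlgebra.of k G ((a⁻¹ : N) : G) • v = v
    have h1 : MonoidAlgebra.of k G ((a : G)⁻¹ * (a : G)) • v = v := by
      rw [inv_mul_cancel, map_one, one_smul]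
    rw [map_mul, mul_smul, ha v hv] at h1
    exact h1

/-- Torsion-free monoid (the definition `Monoid.IsTorsionFree` of Mathlib, Dec. 2024). -/
def Monoid.IsTorsionFree (G : Type*) [Monoid G] : Prop :=
  ∀ g : G, g ≠ 1 → ¬IsOfFinOrder g

open scoped commutatorElement

theorem stmt_12 (k : Type*) [Field k] (G : Type*) [Group G]
    (htf : Monoid.IsTorsionFree G)
    (hnil : commutator G ≤ Subgroup.center G)
    (M : Type*) [AddCommGroup M] [Module (MonoidAlgebra k G) M]
    [Module k M] [IsScalarTower k (MonoidAlgebra k G) M]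
    (hfaith : ∀ g : G, (∀ m : M, MonoidAlgebra.of k G g • m = m) → g = 1)
    (hirr : IsSimpleModule (MonoidAlgebra k G) M)
    (N : Subgroup G) (V : Submodule k M)
    (hVne : V ≠ ⊥)
    (hVirr : ∀ W : Submodule k M, W ≤ V →
      (∀ h ∈ N, ∀ w ∈ W, MonoidAlgebra.of k G h • w ∈ W) → W = ⊥ ∨ W = V)
    (hind : IsInducedFrom k M N V) :
    ∀ g : N, (∃ n : ℕ, 0 < n ∧ g ^ n ∈ moduleKer k M N V) →
      ∀ h : N, ⁅g, h⁆ ∈ moduleKer k M N V := by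
  rintro g ⟨n, hn, hgn⟩ h
  unfold IsInducedFrom IsInducedFromSub at hind
  obtain ⟨-, -, hNV, T, -, -, -, hsup⟩ := hind
  set a : G := (g : G) with ha
  set b : G := (h : G) with hb
  -- the commutator is central
  have hc : ⁅a, b⁆ ∈ Subgroup.center G :=
    hnil (Subgroup.commutator_mem_commutator (Subgroup.mem_top a) (Subgroup.mem_top b))
  have hcent : ∀ x : G, x * ⁅a, b⁆ ^ n = ⁅a, b⁆ ^ n * x := fun x =>
    (Subgroup.mem_center_iff.mp (pow_mem hc n) x)
  -- a^n and (a^n)⁻¹ act trivially on V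
  have hgn' : ∀ v ∈ V, MonoidAlgebra.of k G ((g ^ n : N) : G) • v = v := hgn
  have hgni : ∀ v ∈ V, MonoidAlgebra.of k G (((g ^ n)⁻¹ : N) : G) • v = v :=
    inv_mem hgn
  have han : ∀ v ∈ V, MonoidAlgebra.of k G (a ^ n) • v = v := by
    intro v hv; have := hgn' v hv; rwa [SubmonoidClass.coe_pow] at this
  have hani : ∀ v ∈ V, MonoidAlgebra.of k G ((a ^ n)⁻¹) • v = v := by
    intro v hv; have := hgni v hv
    simpa using this
  -- ⁅a^n, b⁆ acts trivially on V
  have hkey0 : ∀ v ∈ V, MonoidAlgebra.of k G ⁅a ^ n, b⁆ • v = v := by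
    intro v hv
    have hb1 : MonoidAlgebra.of k G b⁻¹ • v ∈ V := hNV b⁻¹ (inv_mem h.2) v hv
    calc MonoidAlgebra.of k G ⁅a ^ n, b⁆ • v
        = MonoidAlgebra.of k G (a ^ n) • (MonoidAlgebra.of k G b •
            (MonoidAlgebra.of k G ((a ^ n)⁻¹) • (MonoidAlgebra.of k G b⁻¹ • v))) := by
          rw [commutatorElement_def, map_mul, map_mul, map_mul, mul_smul, mul_smul, mul_smul]
      _ = MonoidAlgebra.of k G (a ^ n) • (MonoidAlgebra.of k G b •
            (MonoidAlgebra.of k G b⁻¹ • v)) := by rw [hani _ hb1]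
      _ = MonoidAlgebra.of k G (a ^ n) • v := by
          rw [show MonoidAlgebra.of k G b • (MonoidAlgebra.of k G b⁻¹ • v) = v from by
            rw [← mul_smul, ← map_mul, mul_inv_cancel, map_one, one_smul]]
      _ = v := han v hv
  -- power identity ⁅a^n, b⁆ = ⁅a,b⁆^n
  have hcomm : ∀ x : G, Commute x ⁅a, b⁆ := fun x => Subgroup.mem_center_iff.mp hc x
  have hpow : ∀ m : ℕ, ⁅a ^ m, b⁆ = ⁅a, b⁆ ^ m := by
    intro m
    induction m with
    | zero => simp [commutatorElement_def]
    | succ m ih =>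
      have h1 : ⁅a ^ (m + 1), b⁆ = a * ⁅a ^ m, b⁆ * (b * a⁻¹ * b⁻¹) := by
        simp only [commutatorElement_def]; group
      rw [h1, ih, ((hcomm a).pow_right m).eq]
      have h2 : ⁅a, b⁆ ^ (m + 1) = ⁅a, b⁆ ^ m * (a * (b * a⁻¹ * b⁻¹)) := by
        rw [pow_succ, commutatorElement_def]; group
      rw [h2]; group
  -- so ⁅a,b⁆^n acts trivially on V
  have hkeyV : ∀ v ∈ V, MonoidAlgebra.of k G (⁅a, b⁆ ^ n) • v = v := by
    intro v hv; rw [← hpow]; exact hkey0 v hv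
  -- hence on all of M
  have hM : ∀ m : M, MonoidAlgebra.of k G (⁅a, b⁆ ^ n) • m = m := by
    intro m
    have hsub : (⊤ : Submodule k M) ≤
        LinearMap.ker (gSmul k M (⁅a, b⁆ ^ n) - LinearMap.id) := by
      rw [← hsup]
      refine iSup_le fun t => ?_
      rintro x ⟨w, hw, rfl⟩
      simp only [LinearMap.mem_ker, LinearMap.sub_apply, LinearMap.id_apply, sub_eq_zero]
      show MonoidAlgebra.of k G (⁅a, b⁆ ^ n) • (MonoidAlgebra.of k G (t : G) • w)
          = MonoidAlgebra.of k G (t : G) • w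
      rw [← mul_smul, ← map_mul, ← hcent, map_mul, mul_smul, hkeyV w hw]
    have := hsub (Submodule.mem_top (x := m))
    simp [sub_eq_zero] at this; exact this
  -- faithfulness + torsion-freeness: ⁅a,b⁆ = 1
  have hc1 : ⁅a, b⁆ ^ n = 1 := hfaith _ hM
  have hcone : ⁅a, b⁆ = 1 := by
    by_contra hne
    exact htf _ hne (isOfFinOrder_iff_pow_eq_one.mpr ⟨n, hn, hc1⟩)
  have : (⁅g, h⁆ : N) = 1 := by
    have hcoe : ((⁅g, h⁆ : N) : G) = ⁅a, b⁆ := rfl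
    exact OneMemClass.coe_eq_one.mp (hcoe.trans hcone)
  rw [this]
  exact one_mem _
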